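/- Let d > 0, k > 0, γ > 0, h₀ > 0, T_∞ > 0. There exists a unique ν > 0 satisfying h₀T_∞ / (γ√d [1 + (√(dπ) h₀/k) erf(ν)]) = ν e^{ν²}, where erf is the Gauss error function. -/
import Mathlib

open Real Filter Topology

/-- The Kummer confluent hypergeometric function `M(a,b,z)`, defined by its power series. -/
noncomputable def kummerM (a b z : ℝ) : ℝ :=
  ∑' s : ℕ, ((ascPochhammer ℝ s).eval a / ((ascPochhammer ℝ s).eval b * (Nat.factorial s : ℝ)))
      * z ^ s

/-- The Gauss error function. -/
noncomputable def errorFun (z : ℝ) : ℝ :=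
  (2 / Real.sqrt Real.pi) * ∫ u in (0 : ℝ)..z, Real.exp (-u ^ 2)

lemma errorFun_zero : errorFun 0 = 0 := by simp [errorFun]

lemma continuous_errorFun : Continuous errorFun := by
  apply continuous_const.mul
  apply intervalIntegral.continuous_primitive
  intro a b
  exact (Continuous.intervalIntegrable (by continuity) a b)

lemma errorFun_mono {a b : ℝ} (hab : a ≤ b) : errorFun a ≤ errorFun b := by
  unfold errorFun
  have hint : ∀ u v : ℝ, IntervalIntegrable (fun u => Real.exp (-u ^ 2)) MeasureTheory.volume u v :=
    fun u v => Continuous.intervalIntegrable (by continuity) u v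
  have hadd : (∫ u in (0:ℝ)..a, Real.exp (-u ^ 2)) + ∫ u in a..b, Real.exp (-u ^ 2)
      = ∫ u in (0:ℝ)..b, Real.exp (-u ^ 2) :=
    intervalIntegral.integral_add_adjacent_intervals (hint 0 a) (hint a b)
  have hnn : 0 ≤ ∫ u in a..b, Real.exp (-u ^ 2) :=
    intervalIntegral.integral_nonneg hab fun u _ => (Real.exp_pos _).le
  have h2 : (0:ℝ) ≤ 2 / Real.sqrt Real.pi := by positivity
  apply mul_le_mul_of_nonneg_left _ h2
  linarith

lemma errorFun_nonneg {a : ℝ} (ha : 0 ≤ a) : 0 ≤ errorFun a := by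
  simpa [errorFun_zero] using errorFun_mono ha

/-- unique free-boundary coefficient in the case `α = 0` (Tarzia's solution
with zero initial temperature). -/
theorem exists_unique_nu_alpha_zero (d k γ h₀ Tinf : ℝ)
    (hd : 0 < d) (hk : 0 < k) (hγ : 0 < γ) (hh : 0 < h₀) (hT : 0 < Tinf) :
    ∃! ν : ℝ, 0 < ν ∧
      h₀ * Tinf / (γ * Real.sqrt d * (1 + (Real.sqrt (d * Real.pi) * h₀ / k) * errorFun ν))
        = ν * Real.exp (ν ^ 2) := by
  set c : ℝ := Real.sqrt (d * Real.pi) * h₀ / k with hc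
  have hc0 : 0 ≤ c := by positivity
  set B : ℝ := γ * Real.sqrt d with hB
  have hB0 : 0 < B := by positivity
  set A : ℝ := h₀ * Tinf / B with hA
  have hA0 : 0 < A := by positivity
  set g : ℝ → ℝ := fun ν => ν * Real.exp (ν ^ 2) * (1 + c * errorFun ν) with hg
  -- denominator positivity
  have hden : ∀ ν : ℝ, 0 ≤ ν → 0 < 1 + c * errorFun ν := fun ν hν => by
    have := errorFun_nonneg hν
    nlinarith
  -- equation equivalence
  have key : ∀ ν : ℝ, 0 < ν →
      ((h₀ * Tinf / (B * (1 + c * errorFun ν)) = ν * Real.exp (ν ^ 2)) ↔ g ν = A) := by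
    intro ν hν
    have h1 := hden ν hν.le
    rw [hA, hg]
    constructor
    · intro h
      field_simp at h ⊢
      nlinarith [h]
    · intro h
      field_simp at h ⊢
      nlinarith [h]
  -- strict mono of g on [0,∞)
  have gmono : ∀ a b : ℝ, 0 ≤ a → a < b → g a < g b := by
    intro a b ha hab
    have hb : 0 < b := ha.trans_lt hab
    have h1 : a * Real.exp (a ^ 2) < b * Real.exp (b ^ 2) := by
      have he : Real.exp (a ^ 2) ≤ Real.exp (b ^ 2) :=
        Real.exp_le_exp.2 (by nlinarith)
      nlinarith [Real.exp_pos (a ^ 2), Real.exp_pos (b ^ 2)]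
    have h2 : 1 + c * errorFun a ≤ 1 + c * errorFun b := by
      have := errorFun_mono hab.le
      nlinarith
    have hpa := hden a ha
    have hna : 0 ≤ a * Real.exp (a ^ 2) := by positivity
    calc g a = a * Real.exp (a ^ 2) * (1 + c * errorFun a) := rfl
      _ < b * Real.exp (b ^ 2) * (1 + c * errorFun a) :=
          mul_lt_mul_of_pos_right h1 hpa
      _ ≤ b * Real.exp (b ^ 2) * (1 + c * errorFun b) := by
          have : 0 ≤ b * Real.exp (b ^ 2) := by positivity
          exact mul_le_mul_of_nonneg_left h2 this
      _ = g b := rfl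
  have gcont : Continuous g := by
    apply Continuous.mul
    · exact continuous_id.mul (Real.continuous_exp.comp (continuous_pow 2))
    · exact continuous_const.add (continuous_const.mul continuous_errorFun)
  -- existence via IVT on [0, A+1]
  have hM : A < g (A + 1) := by
    have h1 : A + 1 ≤ (A + 1) * Real.exp ((A + 1) ^ 2) := by
      nlinarith [Real.one_le_exp (by positivity : (0:ℝ) ≤ (A + 1) ^ 2), hA0]
    have h2 : (A + 1) * Real.exp ((A + 1) ^ 2) ≤ g (A + 1) := by
      show (A + 1) * Real.exp ((A + 1) ^ 2)
        ≤ (A + 1) * Real.exp ((A + 1) ^ 2) * (1 + c * errorFun (A + 1))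
      have : 0 ≤ (A + 1) * Real.exp ((A + 1) ^ 2) := by positivity
      nlinarith [mul_nonneg this (mul_nonneg hc0 (errorFun_nonneg (by linarith : (0:ℝ) ≤ A + 1)))]
    linarith
  have h0 : g 0 = 0 := by simp [hg]
  obtain ⟨ν, hνmem, hνeq⟩ : ∃ ν ∈ Set.Ioo (0:ℝ) (A + 1), g ν = A := by
    have := intermediate_value_Ioo (by linarith : (0:ℝ) ≤ A + 1) gcont.continuousOn
      (a := 0) (b := A + 1)
    have hmem : A ∈ Set.Ioo (g 0) (g (A + 1)) := by
      rw [h0]; exact ⟨hA0, hM⟩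
    obtain ⟨ν, hν, hνe⟩ := this hmem
    exact ⟨ν, hν, hνe⟩
  refine ⟨ν, ⟨hνmem.1, (key ν hνmem.1).2 hνeq⟩, ?_⟩
  intro y ⟨hy, hyeq⟩
  have hyg : g y = A := (key y hy).1 hyeq
  by_contra hne
  rcases lt_or_gt_of_ne hne with h | h
  · have := gmono y ν hy.le h; rw [hyg, hνeq] at this; exact lt_irrefl _ this
  · have := gmono ν y hνmem.1.le h; rw [hyg, hνeq] at this; exact lt_irrefl _ this
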